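/- For $\nu > 0$ and $0 < x \leq 1$, the Bessel function of the first kind satisfies $1 \leq \frac{J_\nu(\nu x)}{x^\nu J_\nu(\nu)} \leq e^{\nu(1-x)}$; in particular $J_\nu(\nu x) \geq x^\nu J_\nu(\nu) > 0$ and $J_\nu(\nu x) \leq e^{\nu(1-x)} x^\nu J_\nu(\nu)$. -/

import Mathlib

open Real Filter Set

/-- The Bessel function of the first kind of order `ν`, for positive real arguments. -/
noncomputable def besselJ (ν x : ℝ) : ℝ :=
  ∑' m : ℕ, ((-1 : ℝ) ^ m / ((m.factorial : ℝ) * Real.Gamma ((m : ℝ) + ν + 1))) *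
    (x / 2) ^ (2 * (m : ℝ) + ν)

namespace BesselAux

/-- coefficient of `x^(2m)` in `x^(-μ) J_μ(ν x)` -/
noncomputable def bc (ν μ : ℝ) (m : ℕ) : ℝ :=
  (-1 : ℝ) ^ m * (ν / 2) ^ (2 * (m : ℝ) + μ) / ((m.factorial : ℝ) * Real.Gamma ((m : ℝ) + μ + 1))

noncomputable def P (ν μ : ℝ) (x : ℝ) : ℝ := ∑' m : ℕ, bc ν μ m * x ^ (2 * m)

lemma Gamma_pos_aux (μ : ℝ) (hμ : 0 < μ) (m : ℕ) : 0 < Real.Gamma ((m : ℝ) + μ + 1) :=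
  Real.Gamma_pos_of_pos (by positivity)

lemma factorial_Gamma_le (μ : ℝ) (hμ : 0 < μ) (m : ℕ) :
    (m.factorial : ℝ) * Real.Gamma (μ + 1) ≤ Real.Gamma ((m : ℝ) + μ + 1) := by
  induction m with
  | zero => simp
  | succ n ih =>
      have h1 : ((n : ℝ) + μ + 1) ≠ 0 := by positivity
      have : Real.Gamma ((n : ℝ) + μ + 1 + 1) = ((n : ℝ) + μ + 1) * Real.Gamma ((n : ℝ) + μ + 1) :=
        Real.Gamma_add_one h1
      have hcast : ((n + 1 : ℕ) : ℝ) + μ + 1 = ((n : ℝ) + μ + 1) + 1 := by push_cast; ring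
      rw [hcast, this]
      have hfac : ((n + 1).factorial : ℝ) = ((n : ℝ) + 1) * n.factorial := by
        rw [Nat.factorial_succ]; push_cast; ring
      rw [hfac]
      have hG : 0 < Real.Gamma ((n : ℝ) + μ + 1) := Gamma_pos_aux μ hμ n
      calc ((n : ℝ) + 1) * n.factorial * Real.Gamma (μ + 1)
          = ((n : ℝ) + 1) * (n.factorial * Real.Gamma (μ + 1)) := by ring
        _ ≤ ((n : ℝ) + 1) * Real.Gamma ((n : ℝ) + μ + 1) := by
            have : (0:ℝ) < (n:ℝ) + 1 := by positivity
            exact mul_le_mul_of_nonneg_left ih this.le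
        _ ≤ ((n : ℝ) + μ + 1) * Real.Gamma ((n : ℝ) + μ + 1) := by nlinarith

lemma abs_bc_le (ν μ : ℝ) (hν : 0 < ν) (hμ : 0 < μ) (m : ℕ) :
    |bc ν μ m| ≤ (ν/2) ^ μ / Real.Gamma (μ + 1) * ((ν/2)^2) ^ m / m.factorial := by
  have h2 : (0:ℝ) < ν / 2 := by linarith
  have hG : 0 < Real.Gamma ((m : ℝ) + μ + 1) := Gamma_pos_aux μ hμ m
  have hGμ : 0 < Real.Gamma (μ + 1) := Real.Gamma_pos_of_pos (by linarith)
  have hr : (ν / 2) ^ (2 * (m : ℝ) + μ) = ((ν/2)^2) ^ m * (ν/2) ^ μ := by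
    rw [Real.rpow_add h2, ← Real.rpow_natCast ((ν/2)^2) m, ← Real.rpow_natCast ((ν/2)) 2,
      ← Real.rpow_mul h2.le]
    norm_num
  have habs : |bc ν μ m| = (ν / 2) ^ (2 * (m : ℝ) + μ) / ((m.factorial : ℝ) * Real.Gamma ((m : ℝ) + μ + 1)) := by
    unfold bc
    rw [abs_div, abs_mul, abs_pow, abs_neg, abs_one, one_pow, one_mul,
      abs_of_pos (Real.rpow_pos_of_pos h2 _), abs_of_pos (by positivity)]
  rw [habs, hr]
  rw [div_le_iff₀ (by positivity)]
  have key := factorial_Gamma_le μ hμ m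
  have hfac : (0:ℝ) < (m.factorial : ℝ) := by positivity
  have h4 : (ν/2)^μ / Real.Gamma (μ+1) * ((ν/2)^2)^m / m.factorial * (m.factorial * Real.Gamma ((m:ℝ)+μ+1))
      = ((ν/2)^2)^m * (ν/2)^μ * (Real.Gamma ((m:ℝ)+μ+1) / Real.Gamma (μ+1)) := by
    field_simp
  rw [h4]
  have h5 : (1:ℝ) ≤ Real.Gamma ((m:ℝ)+μ+1) / Real.Gamma (μ+1) := by
    rw [le_div_iff₀ hGμ, one_mul]
    calc Real.Gamma (μ+1) = 1 * Real.Gamma (μ+1) := by ring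
      _ ≤ (m.factorial : ℝ) * Real.Gamma (μ+1) := by
          have : (1:ℝ) ≤ m.factorial := by exact_mod_cast Nat.one_le_iff_ne_zero.mpr m.factorial_ne_zero
          nlinarith
      _ ≤ _ := key
  calc ((ν/2)^2)^m * (ν/2)^μ = ((ν/2)^2)^m * (ν/2)^μ * 1 := (mul_one _).symm
    _ ≤ ((ν/2)^2)^m * (ν/2)^μ * (Real.Gamma ((m:ℝ)+μ+1) / Real.Gamma (μ+1)) := by
        have hb : (0:ℝ) ≤ ((ν/2)^2)^m * (ν/2)^μ := by positivity
        exact mul_le_mul_of_nonneg_left h5 hb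

lemma two_mul_add_one_le (m : ℕ) : (2*(m:ℝ)+1) ≤ 3 ^ m := by
  induction m with
  | zero => norm_num
  | succ n ih =>
      have h3 : (1:ℝ) ≤ 3 ^ n := one_le_pow₀ (by norm_num)
      rw [pow_succ]; push_cast; nlinarith

set_option maxHeartbeats 1000000 in
/-- master summable bound -/
lemma summable_master (ν μ : ℝ) (hν : 0 < ν) (hμ : 0 < μ) :
    Summable (fun m : ℕ => (2 * (m:ℝ) + 1) * |bc ν μ m| * 4 ^ m) := by
  have hGμ : 0 < Real.Gamma (μ + 1) := Real.Gamma_pos_of_pos (by linarith)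
  set C := (ν/2) ^ μ / Real.Gamma (μ + 1) with hC
  have hCpos : 0 < C := by
    have := Real.rpow_pos_of_pos (show (0:ℝ) < ν/2 by linarith) μ
    positivity
  have hg : Summable (fun m : ℕ => C * (12 * (ν/2)^2) ^ m / m.factorial) := by
    have := Real.summable_pow_div_factorial (12 * (ν/2)^2)
    exact (this.mul_left C).congr (fun m => by ring)
  have hle : ∀ m : ℕ, (2 * (m:ℝ) + 1) * |bc ν μ m| * 4 ^ m ≤ C * (12 * (ν/2)^2) ^ m / m.factorial := by
    intro m
    have h1 : |bc ν μ m| ≤ C * ((ν/2)^2) ^ m / m.factorial := abs_bc_le ν μ hν hμ m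
    have h2 : (2*(m:ℝ)+1) ≤ 3 ^ m := two_mul_add_one_le m
    have h3 : (0:ℝ) ≤ ((ν/2)^2)^m := by positivity
    calc (2*(m:ℝ)+1) * |bc ν μ m| * 4^m ≤ 3^m * (C * ((ν/2)^2)^m / m.factorial) * 4^m := by
          gcongr
      _ = C * (12 * (ν/2)^2) ^ m / m.factorial := by
          have h12 : (12:ℝ)^m = 3^m * 4^m := by rw [← mul_pow]; norm_num
          rw [mul_pow, h12]; ring
  exact Summable.of_nonneg_of_le (fun m => by positivity) hle hg


lemma summable_P (ν μ : ℝ) (hν : 0 < ν) (hμ : 0 < μ) {x : ℝ} (hx : |x| ≤ 2) :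
    Summable (fun m : ℕ => bc ν μ m * x ^ (2 * m)) := by
  refine Summable.of_norm ?_
  refine Summable.of_nonneg_of_le (fun m => norm_nonneg _) (fun m => ?_) (summable_master ν μ hν hμ)
  have h1 : |x| ^ (2*m) ≤ 2 ^ (2*m) := pow_le_pow_left₀ (abs_nonneg x) hx _
  have h2 : (2:ℝ) ^ (2*m) = 4 ^ m := by rw [pow_mul]; norm_num
  have hb : (0:ℝ) ≤ |bc ν μ m| := abs_nonneg _
  calc ‖bc ν μ m * x ^ (2*m)‖ = |bc ν μ m| * |x| ^ (2*m) := by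
        rw [Real.norm_eq_abs, abs_mul, abs_pow]
    _ ≤ |bc ν μ m| * 4 ^ m := by rw [← h2]; exact mul_le_mul_of_nonneg_left h1 hb
    _ ≤ (2 * (m:ℝ) + 1) * |bc ν μ m| * 4 ^ m := by
        have hm : (0:ℝ) ≤ (m:ℝ) := Nat.cast_nonneg m
        have h4 : (0:ℝ) ≤ (4:ℝ) ^ m := by positivity
        nlinarith [mul_nonneg (mul_nonneg hm hb) h4]

lemma deriv_term_bound (ν μ : ℝ) (m : ℕ) {x : ℝ} (hx : |x| ≤ 2) :
    ‖bc ν μ m * ((2*m) * x ^ (2*m - 1))‖ ≤ (2 * (m:ℝ) + 1) * |bc ν μ m| * 4 ^ m := by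
  have h1 : |x| ^ (2*m-1) ≤ 2 ^ (2*m-1) := pow_le_pow_left₀ (abs_nonneg x) hx _
  have h2 : (2:ℝ) ^ (2*m-1) ≤ 4 ^ m := by
    calc (2:ℝ) ^ (2*m-1) ≤ 2 ^ (2*m) := pow_le_pow_right₀ (by norm_num) (Nat.sub_le _ _)
      _ = 4 ^ m := by rw [pow_mul]; norm_num
  have hb : (0:ℝ) ≤ |bc ν μ m| := abs_nonneg _
  calc ‖bc ν μ m * ((2*m) * x ^ (2*m-1))‖ = |bc ν μ m| * ((2*(m:ℝ)) * |x| ^ (2*m-1)) := by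
        rw [Real.norm_eq_abs, abs_mul, abs_mul, abs_pow]
        norm_num
    _ ≤ |bc ν μ m| * ((2*(m:ℝ)+1) * 4 ^ m) := by
        have hxx : |x| ^ (2*m-1) ≤ 4 ^ m := h1.trans h2
        have : (2*(m:ℝ)) * |x| ^ (2*m-1) ≤ (2*(m:ℝ)+1) * 4^m := by
          have hmn : (0:ℝ) ≤ 2*(m:ℝ) := by positivity
          have h4 : (0:ℝ) ≤ |x| ^ (2*m-1) := by positivity
          nlinarith [pow_pos (show (0:ℝ) < 4 by norm_num) m]
        exact mul_le_mul_of_nonneg_left this hb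
    _ = (2 * (m:ℝ) + 1) * |bc ν μ m| * 4 ^ m := by ring

lemma summable_P' (ν μ : ℝ) (hν : 0 < ν) (hμ : 0 < μ) {x : ℝ} (hx : |x| ≤ 2) :
    Summable (fun m : ℕ => bc ν μ m * ((2*m) * x ^ (2 * m - 1))) := by
  refine Summable.of_norm ?_
  exact Summable.of_nonneg_of_le (fun m => norm_nonneg _)
    (fun m => deriv_term_bound ν μ m hx) (summable_master ν μ hν hμ)

lemma hasDerivAt_P_raw (ν μ : ℝ) (hν : 0 < ν) (hμ : 0 < μ) {x : ℝ} (hx : x ∈ Metric.ball (0:ℝ) 2) :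
    HasDerivAt (P ν μ) (∑' m : ℕ, bc ν μ m * ((2*m) * x ^ (2 * m - 1))) x := by
  refine hasDerivAt_of_tendstoUniformlyOn (l := (atTop : Filter (Finset ℕ)))
    (f := fun (t : Finset ℕ) y => ∑ m ∈ t, bc ν μ m * y ^ (2*m))
    (f' := fun (t : Finset ℕ) y => ∑ m ∈ t, bc ν μ m * ((2*m) * y ^ (2*m - 1)))
    (g := P ν μ) (g' := fun y => ∑' m : ℕ, bc ν μ m * ((2*m) * y ^ (2 * m - 1)))
    Metric.isOpen_ball ?_ ?_ ?_ hx
  · refine tendstoUniformlyOn_tsum (summable_master ν μ hν hμ) (fun m y hy => ?_)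
    have : |y| ≤ 2 := by
      rw [Metric.mem_ball, Real.dist_eq, sub_zero] at hy; exact hy.le
    exact deriv_term_bound ν μ m this
  · filter_upwards with t y _
    refine HasDerivAt.fun_sum (fun m _ => ?_)
    simpa using (hasDerivAt_pow (2*m) y).const_mul (bc ν μ m)
  · intro y hy
    have : |y| ≤ 2 := by
      rw [Metric.mem_ball, Real.dist_eq, sub_zero] at hy; exact hy.le
    exact ((summable_P ν μ hν hμ this).hasSum)


lemma bc_deriv_term (ν μ : ℝ) (hν : 0 < ν) (hμ : 0 < μ) (k : ℕ) (x : ℝ) :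
    bc ν μ (k+1) * ((2*(((k+1):ℕ):ℝ)) * x ^ (2*(k+1) - 1)) = -(ν*x) * (bc ν (μ+1) k * x ^ (2*k)) := by
  have hp : (0:ℝ) < ν/2 := by linarith
  have hG : 0 < Real.Gamma ((k:ℝ) + (μ+1) + 1) := Gamma_pos_aux (μ+1) (by linarith) k
  have hpow : x ^ (2*(k+1)-1) = x ^ (2*k) * x := by
    have h : 2*(k+1)-1 = 2*k+1 := by omega
    rw [h, pow_succ]
  have hA1 : (ν/2) ^ (2*(((k+1):ℕ):ℝ)+μ) = (ν/2) ^ (2*(k:ℝ)+(μ+1)) * (ν/2) := by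
    have h : 2*(((k+1):ℕ):ℝ)+μ = (2*(k:ℝ)+(μ+1)) + 1 := by push_cast; ring
    rw [h, Real.rpow_add hp, Real.rpow_one]
  have hA2 : (((k+1):ℕ):ℝ) + μ + 1 = (k:ℝ) + (μ+1) + 1 := by push_cast; ring
  have hA3 : (((k+1).factorial : ℕ):ℝ) = ((k:ℝ)+1) * (k.factorial : ℝ) := by
    rw [Nat.factorial_succ]; push_cast; ring
  unfold bc
  rw [hpow, hA1, hA2, hA3, pow_succ]
  have hf : ((k.factorial : ℕ):ℝ) ≠ 0 := Nat.cast_ne_zero.mpr k.factorial_ne_zero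
  have hk1 : ((k:ℝ)+1) ≠ 0 := by positivity
  field_simp
  push_cast
  ring

lemma hasDerivAt_P (ν μ : ℝ) (hν : 0 < ν) (hμ : 0 < μ) {x : ℝ} (hx : |x| < 2) :
    HasDerivAt (P ν μ) (-(ν*x) * P ν (μ+1) x) x := by
  have hx' : x ∈ Metric.ball (0:ℝ) 2 := by
    rw [Metric.mem_ball, Real.dist_eq, sub_zero]; exact hx
  have h := hasDerivAt_P_raw ν μ hν hμ hx'
  have heq : (∑' m : ℕ, bc ν μ m * ((2*m) * x ^ (2 * m - 1))) = -(ν*x) * P ν (μ+1) x := by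
    rw [Summable.tsum_eq_zero_add (summable_P' ν μ hν hμ hx.le)]
    have h0 : bc ν μ 0 * ((2*((0:ℕ):ℝ)) * x ^ (2*0 - 1)) = 0 := by norm_num
    rw [h0, zero_add]
    have hterm : ∀ k : ℕ, bc ν μ (k+1) * ((2*(((k+1):ℕ):ℝ)) * x ^ (2*(k+1) - 1))
        = -(ν*x) * (bc ν (μ+1) k * x ^ (2*k)) := fun k => bc_deriv_term ν μ hν hμ k x
    rw [tsum_congr hterm, tsum_mul_left]
    rfl
  rwa [heq] at h

lemma bc_rec0 (ν μ : ℝ) (hν : 0 < ν) (hμ : 0 < μ) :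
    (2*(μ+1)/ν) * bc ν (μ+1) 0 - bc ν μ 0 = 0 := by
  have hp : (0:ℝ) < ν/2 := by linarith
  have hG : 0 < Real.Gamma (μ+1) := Real.Gamma_pos_of_pos (by linarith)
  unfold bc
  have h1 : 2*((0:ℕ):ℝ) + (μ+1) = (μ + 1) := by push_cast; ring
  have h2 : 2*((0:ℕ):ℝ) + μ = μ := by push_cast; ring
  have h3 : ((0:ℕ):ℝ) + (μ+1) + 1 = (μ+1) + 1 := by push_cast; ring
  have h4 : ((0:ℕ):ℝ) + μ + 1 = μ + 1 := by push_cast; ring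
  rw [h1, h2, h3, h4]
  rw [Real.Gamma_add_one (by positivity : (μ+1) ≠ 0)]
  rw [show (μ:ℝ) + 1 = μ + 1 from rfl, Real.rpow_add hp, Real.rpow_one]
  simp only [pow_zero, Nat.factorial_zero, Nat.cast_one, one_mul]
  field_simp
  ring

lemma bc_rec_succ (ν μ : ℝ) (hν : 0 < ν) (hμ : 0 < μ) (k : ℕ) :
    (2*(μ+1)/ν) * bc ν (μ+1) (k+1) - bc ν μ (k+1) = bc ν (μ+2) k := by
  have hp : (0:ℝ) < ν/2 := by linarith
  have hG : 0 < Real.Gamma ((k:ℝ)+μ+2) := Real.Gamma_pos_of_pos (by positivity)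
  unfold bc
  have e1 : 2*(((k+1):ℕ):ℝ) + (μ+1) = (2*(k:ℝ)+μ+2) + 1 := by push_cast; ring
  have e2 : 2*(((k+1):ℕ):ℝ) + μ = (2*(k:ℝ)+μ+2) := by push_cast; ring
  have e3 : 2*((k:ℕ):ℝ) + (μ+2) = (2*(k:ℝ)+μ+2) := by push_cast; ring
  have g1 : (((k+1):ℕ):ℝ) + (μ+1) + 1 = ((k:ℝ)+μ+2) + 1 := by push_cast; ring
  have g2 : (((k+1):ℕ):ℝ) + μ + 1 = ((k:ℝ)+μ+2) := by push_cast; ring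
  have g3 : ((k:ℕ):ℝ) + (μ+2) + 1 = ((k:ℝ)+μ+2) + 1 := by push_cast; ring
  rw [e1, e2, e3, g1, g2, g3]
  rw [Real.Gamma_add_one (by positivity : ((k:ℝ)+μ+2) ≠ 0)]
  rw [Real.rpow_add hp, Real.rpow_one]
  have hA3 : (((k+1).factorial : ℕ):ℝ) = ((k:ℝ)+1) * (k.factorial : ℝ) := by
    rw [Nat.factorial_succ]; push_cast; ring
  rw [hA3, pow_succ]
  have hf : ((k.factorial : ℕ):ℝ) ≠ 0 := Nat.cast_ne_zero.mpr k.factorial_ne_zero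
  have hk1 : ((k:ℝ)+1) ≠ 0 := by positivity
  have hkm : ((k:ℝ)+μ+2) ≠ 0 := by positivity
  field_simp
  ring

lemma P_rec (ν μ : ℝ) (hν : 0 < ν) (hμ : 0 < μ) {x : ℝ} (hx : |x| ≤ 2) :
    P ν μ x + x^2 * P ν (μ+2) x = (2*(μ+1)/ν) * P ν (μ+1) x := by
  have s1 := summable_P ν μ hν hμ hx
  have s2 := summable_P ν (μ+1) hν (by linarith) hx
  have s3 := summable_P ν (μ+2) hν (by linarith) hx
  have key : (2*(μ+1)/ν) * P ν (μ+1) x - P ν μ x = x^2 * P ν (μ+2) x := by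
    have h1 : (2*(μ+1)/ν) * P ν (μ+1) x = ∑' m : ℕ, (2*(μ+1)/ν) * (bc ν (μ+1) m * x ^ (2*m)) := by
      rw [tsum_mul_left]; rfl
    have hsum2 : Summable (fun m : ℕ => (2*(μ+1)/ν) * (bc ν (μ+1) m * x ^ (2*m))) := s2.mul_left _
    rw [h1, P, ← Summable.tsum_sub hsum2 s1]
    have hterm : ∀ m : ℕ, (2*(μ+1)/ν) * (bc ν (μ+1) m * x ^ (2*m)) - bc ν μ m * x ^ (2*m)
        = ((2*(μ+1)/ν) * bc ν (μ+1) m - bc ν μ m) * x ^ (2*m) := fun m => by ring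
    rw [tsum_congr hterm]
    have hsum4 : Summable (fun m : ℕ => ((2*(μ+1)/ν) * bc ν (μ+1) m - bc ν μ m) * x ^ (2*m)) := by
      refine Summable.congr (Summable.sub hsum2 s1) (fun m => by ring)
    rw [Summable.tsum_eq_zero_add hsum4]
    rw [bc_rec0 ν μ hν hμ, zero_mul, zero_add]
    have hterm2 : ∀ k : ℕ, ((2*(μ+1)/ν) * bc ν (μ+1) (k+1) - bc ν μ (k+1)) * x ^ (2*(k+1))
        = x^2 * (bc ν (μ+2) k * x ^ (2*k)) := by
      intro k
      rw [bc_rec_succ ν μ hν hμ k]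
      have : 2*(k+1) = 2*k + 2 := by omega
      rw [this, pow_add]; ring
    rw [tsum_congr hterm2, tsum_mul_left]
    rfl
  linarith [key]


lemma P_zero (ν μ : ℝ) (hν : 0 < ν) (hμ : 0 < μ) : P ν μ 0 = bc ν μ 0 := by
  unfold P
  rw [tsum_eq_single 0 (fun m hm => ?_)]
  · norm_num
  · have : 2 * m ≠ 0 := by omega
    rw [zero_pow this, mul_zero]

lemma bc_zero_pos (ν μ : ℝ) (hν : 0 < ν) (hμ : 0 < μ) : 0 < bc ν μ 0 := by
  unfold bc
  have hp : (0:ℝ) < ν/2 := by linarith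
  have hG : 0 < Real.Gamma (((0:ℕ):ℝ) + μ + 1) := Gamma_pos_aux μ hμ 0
  have := Real.rpow_pos_of_pos hp (2*((0:ℕ):ℝ)+μ)
  positivity

lemma P_contOn (ν μ : ℝ) (hν : 0 < ν) (hμ : 0 < μ) {s : Set ℝ} (hs : s ⊆ Metric.ball (0:ℝ) 2) :
    ContinuousOn (P ν μ) s := fun x hx => by
  have hx2 : |x| < 2 := by
    have := hs hx; rwa [Metric.mem_ball, Real.dist_eq, sub_zero] at this
  exact (hasDerivAt_P ν μ hν hμ hx2).continuousAt.continuousWithinAt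

lemma Icc_subset_ball : Icc (0:ℝ) 1 ⊆ Metric.ball (0:ℝ) 2 := by
  intro x hx
  rw [Metric.mem_ball, Real.dist_eq, sub_zero, abs_lt]
  constructor <;> [linarith [hx.1]; linarith [hx.2]]

/-- positivity of `P ν μ` on `[0,1]` when `ν ≤ μ`. -/
lemma P_pos (ν μ : ℝ) (hν : 0 < ν) (hμν : ν ≤ μ) : ∀ x ∈ Icc (0:ℝ) 1, 0 < P ν μ x := by
  have hμ : 0 < μ := lt_of_lt_of_le hν hμν
  by_contra hcon
  push_neg at hcon
  obtain ⟨x₁, hx₁, hPx₁⟩ := hcon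
  -- the set of points in [0,1] where P ≤ 0
  set S : Set ℝ := Icc (0:ℝ) 1 ∩ (P ν μ) ⁻¹' (Iic 0) with hS
  have hScl : IsClosed S :=
    (P_contOn ν μ hν hμ Icc_subset_ball).preimage_isClosed_of_isClosed isClosed_Icc isClosed_Iic
  have hSne : S.Nonempty := ⟨x₁, hx₁, hPx₁⟩
  have hSbd : BddBelow S := ⟨0, fun y hy => hy.1.1⟩
  set x₀ := sInf S with hx₀def
  have hx₀S : x₀ ∈ S := hScl.csInf_mem hSne hSbd
  have hx₀Icc : x₀ ∈ Icc (0:ℝ) 1 := hx₀S.1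
  have hP0 : 0 < P ν μ 0 := by rw [P_zero ν μ hν hμ]; exact bc_zero_pos ν μ hν hμ
  have hx₀pos : 0 < x₀ := by
    rcases hx₀Icc.1.lt_or_eq with h | h
    · exact h
    · exfalso; have := hx₀S.2; rw [← h] at this; simp only [mem_preimage, mem_Iic] at this; linarith
  have hPpos : ∀ y : ℝ, 0 ≤ y → y < x₀ → 0 < P ν μ y := by
    intro y hy0 hy
    by_contra hPy
    push_neg at hPy
    have hyS : y ∈ S := ⟨⟨hy0, le_trans hy.le hx₀Icc.2⟩, hPy⟩
    exact absurd (csInf_le hSbd hyS) (not_le.mpr hy)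
  -- auxiliary functions
  set u : ℝ → ℝ := fun x => μ * P ν μ x - ν * x^2 * P ν (μ+1) x with hu
  have hu_deriv : ∀ x : ℝ, |x| < 2 → HasDerivAt u
      (-(μ*ν)*x * P ν (μ+1) x - 2*ν*x * P ν (μ+1) x + ν^2*x^3 * P ν (μ+2) x) x := by
    intro x hx
    have h1 := (hasDerivAt_P ν μ hν hμ hx).const_mul μ
    have h2 := hasDerivAt_P ν (μ+1) hν (by linarith) hx
    have h3 : HasDerivAt (fun x : ℝ => ν * x^2) (ν * (2*x)) x := by
      simpa using (((hasDerivAt_pow 2 x)).const_mul ν)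
    have h4 := (h3.fun_mul h2)
    have h5 := h1.fun_sub h4
    refine HasDerivAt.congr_deriv h5 (Eq.symm ?_)
    ring
  have hball : ∀ y : ℝ, y ∈ Icc (0:ℝ) x₀ → |y| < 2 := by
    intro y hy
    rw [abs_lt]; constructor
    · linarith [hy.1]
    · have := hy.2; have := hx₀Icc.2; linarith
  -- the function W = x^μ * u x is monotone on [0, x₀]
  set W : ℝ → ℝ := fun x => x ^ μ * u x with hW
  have hWderiv : ∀ x : ℝ, 0 < x → |x| < 2 → x ≤ 1 →
      HasDerivAt W (x ^ (μ-1) * ((μ^2 - ν^2*x^2) * P ν μ x)) x := by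
    intro x hx0 hx2 hx1
    have hr : HasDerivAt (fun y : ℝ => y ^ μ) (μ * x ^ (μ-1)) x :=
      Real.hasDerivAt_rpow_const (Or.inl hx0.ne')
    have h := hr.fun_mul (hu_deriv x hx2)
    refine HasDerivAt.congr_deriv h (Eq.symm ?_)
    have hxμ : x ^ μ = x ^ (μ-1) * x := by
      rw [← Real.rpow_add_one hx0.ne' (μ-1)]; ring_nf
    have hrec := P_rec ν μ hν hμ (x := x) (by rw [abs_of_pos hx0]; linarith)
    have hrec' : ν * (P ν μ x + x^2 * P ν (μ+2) x) = 2*(μ+1) * P ν (μ+1) x := by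
      rw [hrec]; field_simp
    rw [hxμ]
    linear_combination (-(ν*x^2) * x^(μ-1)) * hrec' 
  have hWcont : ContinuousOn W (Icc 0 x₀) := by
    apply ContinuousOn.mul
    · intro y hy
      exact (Real.continuousAt_rpow_const y μ (Or.inr hμ.le)).continuousWithinAt
    · intro y hy
      exact ((hu_deriv y (hball y hy)).continuousAt).continuousWithinAt
  have hWmono : MonotoneOn W (Icc 0 x₀) := by
    apply monotoneOn_of_deriv_nonneg (convex_Icc _ _) hWcont
    · intro y hy
      rw [interior_Icc] at hy
      exact ((hWderiv y hy.1 (hball y ⟨hy.1.le, hy.2.le⟩) (le_trans hy.2.le hx₀Icc.2)).differentiableAt).differentiableWithinAt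
    · intro y hy
      rw [interior_Icc] at hy
      have hd := hWderiv y hy.1 (hball y ⟨hy.1.le, hy.2.le⟩) (le_trans hy.2.le hx₀Icc.2)
      rw [hd.deriv]
      have h1 : (0:ℝ) ≤ y ^ (μ-1) := (Real.rpow_pos_of_pos hy.1 _).le
      have h2 : 0 < P ν μ y := hPpos y hy.1.le hy.2
      have h3 : 0 ≤ μ^2 - ν^2*y^2 := by
        have hy1 : y ≤ 1 := le_trans hy.2.le hx₀Icc.2
        have h5 : ν * y ≤ μ := by nlinarith [hy.1.le]
        have h6 : (0:ℝ) ≤ μ + ν*y := by nlinarith [hy.1.le]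
        nlinarith [mul_nonneg (sub_nonneg.mpr h5) h6]
      positivity
  have hW0 : W 0 = 0 := by
    simp only [hW]
    rw [Real.zero_rpow hμ.ne', zero_mul]
  have hu_nonneg : ∀ y : ℝ, 0 < y → y ≤ x₀ → 0 ≤ u y := by
    intro y hy0 hy
    have hle := hWmono (left_mem_Icc.mpr hx₀pos.le) ⟨hy0.le, hy⟩ hy0.le
    rw [hW0] at hle
    have hWy : W y = y ^ μ * u y := rfl
    rw [hWy] at hle
    have hyp : 0 < y ^ μ := Real.rpow_pos_of_pos hy0 μ
    by_contra hneg
    push_neg at hneg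
    nlinarith [mul_pos hyp (neg_pos.mpr hneg)]
  -- the function w = x^μ * P ν μ x is monotone on [0, x₀]
  set w : ℝ → ℝ := fun x => x ^ μ * P ν μ x with hw
  have hwderiv : ∀ x : ℝ, 0 < x → |x| < 2 → HasDerivAt w (x ^ (μ-1) * u x) x := by
    intro x hx0 hx2
    have hr : HasDerivAt (fun y : ℝ => y ^ μ) (μ * x ^ (μ-1)) x :=
      Real.hasDerivAt_rpow_const (Or.inl hx0.ne')
    have h := hr.fun_mul (hasDerivAt_P ν μ hν hμ hx2)
    refine HasDerivAt.congr_deriv h (Eq.symm ?_)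
    have hxμ : x ^ μ = x ^ (μ-1) * x := by
      rw [← Real.rpow_add_one hx0.ne' (μ-1)]; ring_nf
    rw [hxμ]
    simp only [hu]
    ring
  have hwcont : ContinuousOn w (Icc 0 x₀) := by
    apply ContinuousOn.mul
    · intro y hy
      exact (Real.continuousAt_rpow_const y μ (Or.inr hμ.le)).continuousWithinAt
    · exact P_contOn ν μ hν hμ (fun y hy => Icc_subset_ball ⟨hy.1, le_trans hy.2 hx₀Icc.2⟩)
  have hwmono : MonotoneOn w (Icc 0 x₀) := by
    apply monotoneOn_of_deriv_nonneg (convex_Icc _ _) hwcont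
    · intro y hy
      rw [interior_Icc] at hy
      exact ((hwderiv y hy.1 (hball y ⟨hy.1.le, hy.2.le⟩)).differentiableAt).differentiableWithinAt
    · intro y hy
      rw [interior_Icc] at hy
      have hd := hwderiv y hy.1 (hball y ⟨hy.1.le, hy.2.le⟩)
      rw [hd.deriv]
      exact mul_nonneg (Real.rpow_pos_of_pos hy.1 _).le (hu_nonneg y hy.1 hy.2.le)
  -- contradiction
  have hkey := hwmono (⟨by linarith, by linarith⟩ : x₀/2 ∈ Icc (0:ℝ) x₀)
    (right_mem_Icc.mpr hx₀pos.le) (by linarith)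
  have hkey' : (x₀/2) ^ μ * P ν μ (x₀/2) ≤ x₀ ^ μ * P ν μ x₀ := hkey
  have hw1 : 0 < (x₀/2) ^ μ * P ν μ (x₀/2) := by
    have h1 : 0 < (x₀/2) ^ μ := Real.rpow_pos_of_pos (by linarith) μ
    have h2 : 0 < P ν μ (x₀/2) := hPpos (x₀/2) (by linarith) (by linarith)
    exact mul_pos h1 h2
  have hw2 : x₀ ^ μ * P ν μ x₀ ≤ 0 := by
    have h1 : 0 < x₀ ^ μ := Real.rpow_pos_of_pos hx₀pos μ
    have h2 : P ν μ x₀ ≤ 0 := hx₀S.2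
    exact mul_nonpos_of_nonneg_of_nonpos h1.le h2
  linarith


lemma F_antitone (ν : ℝ) (hν : 0 < ν) : AntitoneOn (P ν ν) (Icc (0:ℝ) 1) := by
  apply antitoneOn_of_deriv_nonpos (convex_Icc _ _) (P_contOn ν ν hν hν Icc_subset_ball)
  · intro y hy
    rw [interior_Icc] at hy
    have hy2 : |y| < 2 := by rw [abs_lt]; constructor <;> [linarith [hy.1]; linarith [hy.2]]
    exact (hasDerivAt_P ν ν hν hν hy2).differentiableAt.differentiableWithinAt
  · intro y hy
    rw [interior_Icc] at hy
    have hy2 : |y| < 2 := by rw [abs_lt]; constructor <;> [linarith [hy.1]; linarith [hy.2]]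
    rw [(hasDerivAt_P ν ν hν hν hy2).deriv]
    have hG : 0 < P ν (ν+1) y := P_pos ν (ν+1) hν (by linarith) y ⟨hy.1.le, hy.2.le⟩
    have : 0 ≤ ν * y := mul_nonneg hν.le hy.1.le
    nlinarith

lemma F_lower (ν : ℝ) (hν : 0 < ν) {x : ℝ} (hx0 : 0 ≤ x) (hx1 : x ≤ 1) :
    P ν ν 1 ≤ P ν ν x :=
  F_antitone ν hν ⟨hx0, hx1⟩ (right_mem_Icc.mpr zero_le_one) hx1

lemma q_hasDeriv (ν : ℝ) (hν : 0 < ν) {x : ℝ} (hx : |x| < 2) :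
    HasDerivAt (fun y => ν * Real.exp (ν*y) * (P ν ν y - y * P ν (ν+1) y))
      (ν * Real.exp (ν*x) * (P ν (ν+1) x * (2*ν+1-2*ν*x))) x := by
  have hE : HasDerivAt (fun y : ℝ => Real.exp (ν*y)) (Real.exp (ν*x) * ν) x := by
    have h1 : HasDerivAt (fun y : ℝ => ν*y) ν x := by
      simpa using (hasDerivAt_id x).const_mul ν
    exact h1.exp
  have hF := hasDerivAt_P ν ν hν hν hx
  have hG := hasDerivAt_P ν (ν+1) hν (by linarith) hx
  have hxG : HasDerivAt (fun y : ℝ => y * P ν (ν+1) y)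
      (1 * P ν (ν+1) x + x * (-(ν*x) * P ν (ν+1+1) x)) x := (hasDerivAt_id x).mul hG
  have hin := hF.fun_sub hxG
  have houter := (hE.const_mul ν).fun_mul hin
  refine HasDerivAt.congr_deriv houter (Eq.symm ?_)
  have hrec := P_rec ν ν hν hν (x := x) hx.le
  have hrec' : ν * (P ν ν x + x^2 * P ν (ν+2) x) = 2*(ν+1) * P ν (ν+1) x := by
    rw [hrec]; field_simp
  rw [show ν+1+1 = ν+2 from by ring] at houter ⊢
  linear_combination (-(ν * Real.exp (ν*x))) * hrec'

lemma q_nonneg (ν : ℝ) (hν : 0 < ν) {x : ℝ} (hx0 : 0 ≤ x) (hx1 : x ≤ 1) :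
    0 ≤ ν * Real.exp (ν*x) * (P ν ν x - x * P ν (ν+1) x) := by
  set q : ℝ → ℝ := fun y => ν * Real.exp (ν*y) * (P ν ν y - y * P ν (ν+1) y) with hq
  have hball : ∀ y : ℝ, y ∈ Icc (0:ℝ) 1 → |y| < 2 := by
    intro y hy; rw [abs_lt]; constructor <;> [linarith [hy.1]; linarith [hy.2]]
  have hmono : MonotoneOn q (Icc (0:ℝ) 1) := by
    apply monotoneOn_of_deriv_nonneg (convex_Icc _ _)
    · intro y hy
      exact (q_hasDeriv ν hν (hball y hy)).continuousAt.continuousWithinAt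
    · intro y hy
      rw [interior_Icc] at hy
      exact (q_hasDeriv ν hν (hball y ⟨hy.1.le, hy.2.le⟩)).differentiableAt.differentiableWithinAt
    · intro y hy
      rw [interior_Icc] at hy
      rw [(q_hasDeriv ν hν (hball y ⟨hy.1.le, hy.2.le⟩)).deriv]
      have hG : 0 < P ν (ν+1) y := P_pos ν (ν+1) hν (by linarith) y ⟨hy.1.le, hy.2.le⟩
      have h1 : 0 ≤ 2*ν+1-2*ν*y := by nlinarith [hy.2]
      have h2 : 0 < Real.exp (ν*y) := Real.exp_pos _
      positivity
  have hq0 : 0 ≤ q 0 := by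
    have hF0 : 0 < P ν ν 0 := P_pos ν ν hν le_rfl 0 (left_mem_Icc.mpr zero_le_one)
    have : q 0 = ν * Real.exp (ν*0) * (P ν ν 0 - 0 * P ν (ν+1) 0) := rfl
    rw [this, mul_zero, Real.exp_zero, zero_mul, sub_zero]
    nlinarith [mul_pos hν hF0]
  have hle := hmono (left_mem_Icc.mpr zero_le_one) ⟨hx0, hx1⟩ hx0
  have hqx : q x = ν * Real.exp (ν*x) * (P ν ν x - x * P ν (ν+1) x) := rfl
  linarith [hqx ▸ hle]

lemma F_upper (ν : ℝ) (hν : 0 < ν) {x : ℝ} (hx0 : 0 ≤ x) (hx1 : x ≤ 1) :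
    Real.exp (ν*x) * P ν ν x ≤ Real.exp ν * P ν ν 1 := by
  set h : ℝ → ℝ := fun y => Real.exp (ν*y) * P ν ν y with hh
  have hball : ∀ y : ℝ, y ∈ Icc (0:ℝ) 1 → |y| < 2 := by
    intro y hy; rw [abs_lt]; constructor <;> [linarith [hy.1]; linarith [hy.2]]
  have hderiv : ∀ y : ℝ, |y| < 2 → HasDerivAt h
      (ν * Real.exp (ν*y) * (P ν ν y - y * P ν (ν+1) y)) y := by
    intro y hy
    have hE : HasDerivAt (fun z : ℝ => Real.exp (ν*z)) (Real.exp (ν*y) * ν) y := by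
      have h1 : HasDerivAt (fun z : ℝ => ν*z) ν y := by
        simpa using (hasDerivAt_id y).const_mul ν
      exact h1.exp
    have hF := hasDerivAt_P ν ν hν hν hy
    have := hE.fun_mul hF
    refine HasDerivAt.congr_deriv this (Eq.symm ?_)
    ring
  have hmono : MonotoneOn h (Icc (0:ℝ) 1) := by
    apply monotoneOn_of_deriv_nonneg (convex_Icc _ _)
    · intro y hy
      exact (hderiv y (hball y hy)).continuousAt.continuousWithinAt
    · intro y hy
      rw [interior_Icc] at hy
      exact (hderiv y (hball y ⟨hy.1.le, hy.2.le⟩)).differentiableAt.differentiableWithinAt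
    · intro y hy
      rw [interior_Icc] at hy
      rw [(hderiv y (hball y ⟨hy.1.le, hy.2.le⟩)).deriv]
      exact q_nonneg ν hν hy.1.le hy.2.le
  have := hmono ⟨hx0, hx1⟩ (right_mem_Icc.mpr zero_le_one) hx1
  simpa [hh, mul_one] using this

lemma besselJ_eq_P (ν : ℝ) (hν : 0 < ν) {x : ℝ} (hx0 : 0 < x) :
    besselJ ν (ν*x) = x ^ ν * P ν ν x := by
  unfold besselJ P
  rw [← tsum_mul_left]
  apply tsum_congr
  intro m
  have hp : (0:ℝ) < ν/2 := by linarith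
  have h1 : (ν*x)/2 = (ν/2) * x := by ring
  have h2 : ((ν/2) * x) ^ (2*(m:ℝ)+ν) = (ν/2) ^ (2*(m:ℝ)+ν) * x ^ (2*(m:ℝ)+ν) :=
    Real.mul_rpow hp.le hx0.le
  have h3 : x ^ (2*(m:ℝ)+ν) = x ^ (2*m) * x ^ ν := by
    rw [Real.rpow_add hx0]
    congr 1
    rw [show (2*(m:ℝ)) = ((2*m : ℕ) : ℝ) by push_cast; ring, Real.rpow_natCast]
  rw [h1, h2, h3]
  unfold bc
  ring

lemma besselJ_nu_eq (ν : ℝ) (hν : 0 < ν) : besselJ ν ν = P ν ν 1 := by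
  have := besselJ_eq_P ν hν (x := 1) one_pos
  rwa [mul_one, Real.one_rpow, one_mul] at this

end BesselAux

open BesselAux in
theorem stmt14 (ν x : ℝ) (hν : 0 < ν) (hx0 : 0 < x) (hx1 : x ≤ 1) :
    (1 ≤ besselJ ν (ν * x) / (x ^ ν * besselJ ν ν) ∧
      besselJ ν (ν * x) / (x ^ ν * besselJ ν ν) ≤ Real.exp (ν * (1 - x))) ∧
    0 < x ^ ν * besselJ ν ν ∧
    x ^ ν * besselJ ν ν ≤ besselJ ν (ν * x) ∧
    besselJ ν (ν * x) ≤ Real.exp (ν * (1 - x)) * (x ^ ν * besselJ ν ν) := by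
  have hF1 : 0 < P ν ν 1 := P_pos ν ν hν le_rfl 1 (right_mem_Icc.mpr zero_le_one)
  have hb1 : besselJ ν (ν*x) = x ^ ν * P ν ν x := besselJ_eq_P ν hν hx0
  have hb2 : besselJ ν ν = P ν ν 1 := besselJ_nu_eq ν hν
  have hxν : 0 < x ^ ν := Real.rpow_pos_of_pos hx0 ν
  have hlow : P ν ν 1 ≤ P ν ν x := F_lower ν hν hx0.le hx1
  have hupper' : Real.exp (ν*x) * P ν ν x ≤ Real.exp ν * P ν ν 1 := F_upper ν hν hx0.le hx1
  have hEpos : 0 < Real.exp (ν*x) := Real.exp_pos _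
  have hup : P ν ν x ≤ Real.exp (ν*(1-x)) * P ν ν 1 := by
    have h3 : Real.exp (ν*x) * Real.exp (ν*(1-x)) = Real.exp ν := by
      rw [← Real.exp_add]; ring_nf
    have h6 : Real.exp (ν*x) * Real.exp (ν*(1-x)) * P ν ν 1 = Real.exp ν * P ν ν 1 := by rw [h3]
    have h5 : 0 ≤ Real.exp (ν*x) * (Real.exp (ν*(1-x)) * P ν ν 1 - P ν ν x) := by nlinarith
    by_contra hc
    push_neg at hc
    nlinarith [mul_pos hEpos (by linarith : (0:ℝ) < P ν ν x - Real.exp (ν*(1-x)) * P ν ν 1)]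
  have hratio : besselJ ν (ν * x) / (x ^ ν * besselJ ν ν) = P ν ν x / P ν ν 1 := by
    rw [hb1, hb2, mul_div_mul_left _ _ (ne_of_gt hxν)]
  refine ⟨⟨?_, ?_⟩, ?_, ?_, ?_⟩
  · rw [hratio]
    exact (one_le_div hF1).mpr hlow
  · rw [hratio]
    exact (div_le_iff₀ hF1).mpr hup
  · rw [hb2]; exact mul_pos hxν hF1
  · rw [hb1, hb2]
    exact mul_le_mul_of_nonneg_left hlow hxν.le
  · rw [hb1, hb2]
    calc x ^ ν * P ν ν x ≤ x ^ ν * (Real.exp (ν*(1-x)) * P ν ν 1) :=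
          mul_le_mul_of_nonneg_left hup hxν.le
      _ = Real.exp (ν*(1-x)) * (x ^ ν * P ν ν 1) := by ring
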